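/- Let f be C^4 near (x,y) and suppose the curve t ↦ (x + v sin t + u(1-cos t), y - u sin t + v(1-cos t), z + a sin t + b(1-cos t)) has contact of order 3 with the graph of f at t = 0. Then it has contact of order 4 if and only if f_xxxx v⁴ - 4 f_xxxy v³u + 6 f_xxyy v²u² - 4 f_xyyy vu³ + f_yyyy u⁴ + 6uv² f_xxx + 6v(v²-2u²) f_xxy + 6u(u²-2v²) f_xyy + 6u²v f_yyy + 3(u²-v²)(f_xx - f_yy) + 12 uv f_xy = 0 at (x,y). -/

import Mathlib

open Real Set Filter

noncomputable def pdx (f : ℝ → ℝ → ℝ) : ℝ → ℝ → ℝ := fun x y => deriv (fun s => f s y) x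
noncomputable def pdy (f : ℝ → ℝ → ℝ) : ℝ → ℝ → ℝ := fun x y => deriv (fun s => f x s) y

/-! ### Auxiliary machinery -/

noncomputable def D1 (G : ℝ × ℝ → ℝ) : ℝ × ℝ → ℝ := fun p => fderiv ℝ G p (1, 0)
noncomputable def D2 (G : ℝ × ℝ → ℝ) : ℝ × ℝ → ℝ := fun p => fderiv ℝ G p (0, 1)

lemma D1_contDiffOn {G : ℝ × ℝ → ℝ} {U : Set (ℝ × ℝ)} {n m : WithTop ℕ∞} (hU : IsOpen U)
    (hG : ContDiffOn ℝ n G U) (h : m + 1 ≤ n) : ContDiffOn ℝ m (D1 G) U :=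
  (hG.fderiv_of_isOpen hU h).clm_apply contDiffOn_const

lemma D2_contDiffOn {G : ℝ × ℝ → ℝ} {U : Set (ℝ × ℝ)} {n m : WithTop ℕ∞} (hU : IsOpen U)
    (hG : ContDiffOn ℝ n G U) (h : m + 1 ≤ n) : ContDiffOn ℝ m (D2 G) U :=
  (hG.fderiv_of_isOpen hU h).clm_apply contDiffOn_const

lemma D2_congr {G₁ G₂ : ℝ × ℝ → ℝ} {U : Set (ℝ × ℝ)} (hU : IsOpen U)
    (h : ∀ q ∈ U, G₁ q = G₂ q) {p : ℝ × ℝ} (hp : p ∈ U) : D2 G₁ p = D2 G₂ p := by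
  have : G₁ =ᶠ[nhds p] G₂ := eventually_of_mem (hU.mem_nhds hp) h
  simp only [D2, this.fderiv_eq]

lemma D_swap {G : ℝ × ℝ → ℝ} {U : Set (ℝ × ℝ)} (hU : IsOpen U)
    (hG : ContDiffOn ℝ 2 G U) {p : ℝ × ℝ} (hp : p ∈ U) : D1 (D2 G) p = D2 (D1 G) p := by
  have hd : DifferentiableOn ℝ G U := hG.differentiableOn (by norm_num)
  have hf' : ∀ᶠ q in nhds p, HasFDerivAt G (fderiv ℝ G q) q := by
    filter_upwards [hU.mem_nhds hp] with q hq using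
      (hd.differentiableAt (hU.mem_nhds hq)).hasFDerivAt
  have h1 : ContDiffOn ℝ 1 (fderiv ℝ G) U := hG.fderiv_of_isOpen hU (by norm_num)
  have hdf : DifferentiableAt ℝ (fderiv ℝ G) p :=
    (h1.differentiableOn (by norm_num)).differentiableAt (hU.mem_nhds hp)
  have hsym := second_derivative_symmetric_of_eventually hf' hdf.hasFDerivAt
  have e1 : ∀ w : ℝ × ℝ, fderiv ℝ (fun q => fderiv ℝ G q w) p
      = (fderiv ℝ (fderiv ℝ G) p).flip w := by
    intro w
    have : HasFDerivAt (fun q => fderiv ℝ G q w)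
        ((ContinuousLinearMap.apply ℝ ℝ w).comp (fderiv ℝ (fderiv ℝ G) p)) p :=
      (ContinuousLinearMap.apply ℝ ℝ w).hasFDerivAt.comp p hdf.hasFDerivAt
    rw [this.fderiv]; rfl
  show fderiv ℝ (fun q => fderiv ℝ G q (0,1)) p (1,0)
      = fderiv ℝ (fun q => fderiv ℝ G q (1,0)) p (0,1)
  rw [e1, e1]
  exact hsym _ _

lemma comp_hasDerivAt {G : ℝ × ℝ → ℝ} {U : Set (ℝ × ℝ)} (hU : IsOpen U)
    (hG : DifferentiableOn ℝ G U) (γ : ℝ → ℝ × ℝ) {t : ℝ} {γ' : ℝ × ℝ}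
    (hγ : HasDerivAt γ γ' t) (ht : γ t ∈ U) :
    HasDerivAt (fun s => G (γ s)) (D1 G (γ t) * γ'.1 + D2 G (γ t) * γ'.2) t := by
  have hGd := (hG.differentiableAt (hU.mem_nhds ht)).hasFDerivAt
  have h := hGd.comp_hasDerivAt t hγ
  have key : (fderiv ℝ G (γ t)) γ' = D1 G (γ t) * γ'.1 + D2 G (γ t) * γ'.2 := by
    obtain ⟨w1, w2⟩ := γ'
    have e : ((w1, w2) : ℝ × ℝ) = w1 • ((1:ℝ),(0:ℝ)) + w2 • ((0:ℝ),(1:ℝ)) := by ext <;> simp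
    rw [e, map_add, map_smul, map_smul]
    simp [D1, D2, smul_eq_mul, mul_comm]
  rw [key] at h
  exact h

lemma pd_eq_D {g : ℝ → ℝ → ℝ} {G : ℝ × ℝ → ℝ} {U : Set (ℝ × ℝ)} (hU : IsOpen U)
    (hG : DifferentiableOn ℝ G U) (hg : ∀ q ∈ U, g q.1 q.2 = G q) {p : ℝ × ℝ} (hp : p ∈ U) :
    pdx g p.1 p.2 = D1 G p ∧ pdy g p.1 p.2 = D2 G p := by
  constructor
  · have hγ : HasDerivAt (fun s : ℝ => ((s, p.2) : ℝ × ℝ)) (1, 0) p.1 :=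
      (hasDerivAt_id p.1).prodMk (hasDerivAt_const p.1 p.2)
    have hd := comp_hasDerivAt hU hG _ hγ (by simpa using hp)
    simp only [mul_one, mul_zero, add_zero] at hd
    have heq : (fun s => g s p.2) =ᶠ[nhds p.1] (fun s => G (s, p.2)) := by
      have hopen : IsOpen {s : ℝ | (s, p.2) ∈ U} := hU.preimage (by fun_prop)
      filter_upwards [hopen.mem_nhds (by simpa using hp)] with s hs using hg _ hs
    rw [pdx, heq.deriv_eq, hd.deriv]
  · have hγ : HasDerivAt (fun s : ℝ => ((p.1, s) : ℝ × ℝ)) (0, 1) p.2 :=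
      (hasDerivAt_const p.2 p.1).prodMk (hasDerivAt_id p.2)
    have hd := comp_hasDerivAt hU hG _ hγ (by simpa using hp)
    simp only [mul_one, mul_zero, zero_add] at hd
    have heq : (fun s => g p.1 s) =ᶠ[nhds p.2] (fun s => G (p.1, s)) := by
      have hopen : IsOpen {s : ℝ | ((p.1, s) : ℝ × ℝ) ∈ U} := hU.preimage (by fun_prop)
      filter_upwards [hopen.mem_nhds (by simpa using hp)] with s hs using hg _ hs
    rw [pdy, heq.deriv_eq, hd.deriv]

/-! ### Partial derivative words -/

noncomputable def q0 (f : ℝ → ℝ → ℝ) : ℝ × ℝ → ℝ := fun p => f p.1 p.2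
noncomputable def q1 (f : ℝ → ℝ → ℝ) : ℝ × ℝ → ℝ := D1 (q0 f)
noncomputable def q2 (f : ℝ → ℝ → ℝ) : ℝ × ℝ → ℝ := D2 (q0 f)
noncomputable def q11 (f : ℝ → ℝ → ℝ) : ℝ × ℝ → ℝ := D1 (q1 f)
noncomputable def q21 (f : ℝ → ℝ → ℝ) : ℝ × ℝ → ℝ := D2 (q1 f)
noncomputable def q22 (f : ℝ → ℝ → ℝ) : ℝ × ℝ → ℝ := D2 (q2 f)
noncomputable def q111 (f : ℝ → ℝ → ℝ) : ℝ × ℝ → ℝ := D1 (q11 f)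
noncomputable def q211 (f : ℝ → ℝ → ℝ) : ℝ × ℝ → ℝ := D2 (q11 f)
noncomputable def q221 (f : ℝ → ℝ → ℝ) : ℝ × ℝ → ℝ := D2 (q21 f)
noncomputable def q222 (f : ℝ → ℝ → ℝ) : ℝ × ℝ → ℝ := D2 (q22 f)
noncomputable def q1111 (f : ℝ → ℝ → ℝ) : ℝ × ℝ → ℝ := D1 (q111 f)
noncomputable def q2111 (f : ℝ → ℝ → ℝ) : ℝ × ℝ → ℝ := D2 (q111 f)
noncomputable def q2211 (f : ℝ → ℝ → ℝ) : ℝ × ℝ → ℝ := D2 (q211 f)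
noncomputable def q2221 (f : ℝ → ℝ → ℝ) : ℝ × ℝ → ℝ := D2 (q221 f)
noncomputable def q2222 (f : ℝ → ℝ → ℝ) : ℝ × ℝ → ℝ := D2 (q222 f)

/-! ### The curve -/

noncomputable def crv (x y u v : ℝ) : ℝ → ℝ × ℝ := fun t =>
  (x + v * Real.sin t + u * (1 - Real.cos t), y - u * Real.sin t + v * (1 - Real.cos t))
noncomputable def AA (u v : ℝ) : ℝ → ℝ := fun t => v * Real.cos t + u * Real.sin t
noncomputable def BB (u v : ℝ) : ℝ → ℝ := fun t => v * Real.sin t - u * Real.cos t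
noncomputable def CC (u v : ℝ) : ℝ → ℝ := fun t => u * Real.cos t - v * Real.sin t

lemma crv_hasDerivAt (x y u v t : ℝ) : HasDerivAt (crv x y u v) (AA u v t, BB u v t) t := by
  unfold crv
  apply HasDerivAt.prodMk
  · have h := (((Real.hasDerivAt_sin t).const_mul v).const_add x).add
      (((Real.hasDerivAt_cos t).const_sub 1).const_mul u)
    refine h.congr_deriv ?_
    unfold AA; ring
  · have h3 := (((Real.hasDerivAt_sin t).const_mul u).const_sub y).add
      (((Real.hasDerivAt_cos t).const_sub 1).const_mul v)
    refine h3.congr_deriv ?_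
    unfold BB; ring
  
lemma AA_hasDerivAt (u v t : ℝ) : HasDerivAt (AA u v) (CC u v t) t := by
  unfold AA
  have h := ((Real.hasDerivAt_cos t).const_mul v).add ((Real.hasDerivAt_sin t).const_mul u)
  refine h.congr_deriv ?_
  unfold CC; ring

lemma BB_hasDerivAt (u v t : ℝ) : HasDerivAt (BB u v) (AA u v t) t := by
  unfold BB
  have h := ((Real.hasDerivAt_sin t).const_mul v).sub ((Real.hasDerivAt_cos t).const_mul u)
  refine h.congr_deriv ?_
  unfold AA; ring

lemma CC_hasDerivAt (u v t : ℝ) : HasDerivAt (CC u v) (-AA u v t) t := by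
  unfold CC
  have h := ((Real.hasDerivAt_cos t).const_mul u).sub ((Real.hasDerivAt_sin t).const_mul v)
  refine h.congr_deriv ?_
  unfold AA; ring

/-! ### The successive derivatives of the defect function along the curve -/

noncomputable def gg1 (f : ℝ → ℝ → ℝ) (x y a b u v : ℝ) : ℝ → ℝ := fun t =>
  a * Real.cos t + b * Real.sin t
    - (q1 f (crv x y u v t) * AA u v t + q2 f (crv x y u v t) * BB u v t)

noncomputable def gg2 (f : ℝ → ℝ → ℝ) (x y a b u v : ℝ) : ℝ → ℝ := fun t =>
  b * Real.cos t - a * Real.sin t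
    - (q11 f (crv x y u v t) * AA u v t ^ 2
      + 2 * (q21 f (crv x y u v t) * (AA u v t * BB u v t))
      + q22 f (crv x y u v t) * BB u v t ^ 2
      + q1 f (crv x y u v t) * CC u v t
      + q2 f (crv x y u v t) * AA u v t)

noncomputable def gg3 (f : ℝ → ℝ → ℝ) (x y a b u v : ℝ) : ℝ → ℝ := fun t =>
  -(a * Real.cos t) - b * Real.sin t
    - (q111 f (crv x y u v t) * AA u v t ^ 3
      + 3 * (q211 f (crv x y u v t) * (AA u v t ^ 2 * BB u v t))
      + 3 * (q221 f (crv x y u v t) * (AA u v t * BB u v t ^ 2))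
      + q222 f (crv x y u v t) * BB u v t ^ 3
      + 3 * (q11 f (crv x y u v t) * (AA u v t * CC u v t))
      + 3 * (q21 f (crv x y u v t) * (AA u v t ^ 2 + BB u v t * CC u v t))
      + 3 * (q22 f (crv x y u v t) * (AA u v t * BB u v t))
      - q1 f (crv x y u v t) * AA u v t
      + q2 f (crv x y u v t) * CC u v t)

noncomputable def gg4 (f : ℝ → ℝ → ℝ) (x y a b u v : ℝ) : ℝ → ℝ := fun t =>
  a * Real.sin t - b * Real.cos t
    - (q1111 f (crv x y u v t) * AA u v t ^ 4
      + 4 * (q2111 f (crv x y u v t) * (AA u v t ^ 3 * BB u v t))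
      + 6 * (q2211 f (crv x y u v t) * (AA u v t ^ 2 * BB u v t ^ 2))
      + 4 * (q2221 f (crv x y u v t) * (AA u v t * BB u v t ^ 3))
      + q2222 f (crv x y u v t) * BB u v t ^ 4
      + 6 * (q111 f (crv x y u v t) * (AA u v t ^ 2 * CC u v t))
      + q211 f (crv x y u v t) * (6 * AA u v t ^ 3 + 12 * (AA u v t * (BB u v t * CC u v t)))
      + q221 f (crv x y u v t) * (12 * (AA u v t ^ 2 * BB u v t) + 6 * (BB u v t ^ 2 * CC u v t))
      + 6 * (q222 f (crv x y u v t) * (AA u v t * BB u v t ^ 2))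
      + q11 f (crv x y u v t) * (3 * CC u v t ^ 2 - 4 * AA u v t ^ 2)
      + q21 f (crv x y u v t) * (10 * (AA u v t * CC u v t) - 4 * (AA u v t * BB u v t))
      + q22 f (crv x y u v t) * (3 * AA u v t ^ 2 + 4 * (BB u v t * CC u v t))
      - q1 f (crv x y u v t) * CC u v t
      - q2 f (crv x y u v t) * AA u v t)

/-- given third order contact conditions, the conic has fourth order
contact with the graph of `f` at `t = 0` iff the fourth order equation holds. -/
theorem stmt_10 (f : ℝ → ℝ → ℝ) (x y z a b u v : ℝ)
    (hf : ContDiffAt ℝ 4 (fun p : ℝ × ℝ => f p.1 p.2) (x, y))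
    (huv : (u, v) ≠ ((0 : ℝ), (0 : ℝ)))
    (hz : z = f x y)
    (ha : a = pdx f x y * v - pdy f x y * u)
    (hb : b = pdx f x y * u + pdy f x y * v
        + pdx (pdx f) x y * v ^ 2 - 2 * pdy (pdx f) x y * u * v + pdy (pdy f) x y * u ^ 2)
    (h3 : pdx (pdx (pdx f)) x y * v ^ 3 - 3 * pdy (pdx (pdx f)) x y * v ^ 2 * u
        + 3 * pdy (pdy (pdx f)) x y * v * u ^ 2 - pdy (pdy (pdy f)) x y * u ^ 3
        + 3 * (pdx (pdx f) x y - pdy (pdy f) x y) * u * v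
        + 3 * pdy (pdx f) x y * (v ^ 2 - u ^ 2) = 0) :
    Tendsto (fun t : ℝ =>
        (z + a * Real.sin t + b * (1 - Real.cos t)
          - f (x + v * Real.sin t + u * (1 - Real.cos t))
              (y - u * Real.sin t + v * (1 - Real.cos t))) / t ^ 4)
      (nhdsWithin 0 {(0 : ℝ)}ᶜ) (nhds 0)
    ↔ pdx (pdx (pdx (pdx f))) x y * v ^ 4
        - 4 * pdy (pdx (pdx (pdx f))) x y * v ^ 3 * u
        + 6 * pdy (pdy (pdx (pdx f))) x y * v ^ 2 * u ^ 2
        - 4 * pdy (pdy (pdy (pdx f))) x y * v * u ^ 3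
        + pdy (pdy (pdy (pdy f))) x y * u ^ 4
        + 6 * u * v ^ 2 * pdx (pdx (pdx f)) x y
        + 6 * v * (v ^ 2 - 2 * u ^ 2) * pdy (pdx (pdx f)) x y
        + 6 * u * (u ^ 2 - 2 * v ^ 2) * pdy (pdy (pdx f)) x y
        + 6 * u ^ 2 * v * pdy (pdy (pdy f)) x y
        + 3 * (u ^ 2 - v ^ 2) * (pdx (pdx f) x y - pdy (pdy f) x y)
        + 12 * u * v * pdy (pdx f) x y = 0 := by
  -- ### obtain an open neighbourhood on which f is C⁴
  obtain ⟨U₀, hU₀, hFC⟩ := hf.contDiffOn le_rfl (by norm_num)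
  obtain ⟨U, hUsub, hU, hp0⟩ := mem_nhds_iff.1 hU₀
  have h0C : ContDiffOn ℝ 4 (q0 f) U := hFC.mono hUsub
  -- ### regularity of all the partial derivative words
  have h1C : ContDiffOn ℝ 3 (q1 f) U := D1_contDiffOn hU h0C (by norm_num)
  have h2C : ContDiffOn ℝ 3 (q2 f) U := D2_contDiffOn hU h0C (by norm_num)
  have h11C : ContDiffOn ℝ 2 (q11 f) U := D1_contDiffOn hU h1C (by norm_num)
  have h21C : ContDiffOn ℝ 2 (q21 f) U := D2_contDiffOn hU h1C (by norm_num)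
  have h22C : ContDiffOn ℝ 2 (q22 f) U := D2_contDiffOn hU h2C (by norm_num)
  have h111C : ContDiffOn ℝ 1 (q111 f) U := D1_contDiffOn hU h11C (by norm_num)
  have h211C : ContDiffOn ℝ 1 (q211 f) U := D2_contDiffOn hU h11C (by norm_num)
  have h221C : ContDiffOn ℝ 1 (q221 f) U := D2_contDiffOn hU h21C (by norm_num)
  have h222C : ContDiffOn ℝ 1 (q222 f) U := D2_contDiffOn hU h22C (by norm_num)
  have h0d : DifferentiableOn ℝ (q0 f) U := h0C.differentiableOn (by norm_num)
  have h1d : DifferentiableOn ℝ (q1 f) U := h1C.differentiableOn (by norm_num)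
  have h2d : DifferentiableOn ℝ (q2 f) U := h2C.differentiableOn (by norm_num)
  have h11d : DifferentiableOn ℝ (q11 f) U := h11C.differentiableOn (by norm_num)
  have h21d : DifferentiableOn ℝ (q21 f) U := h21C.differentiableOn (by norm_num)
  have h22d : DifferentiableOn ℝ (q22 f) U := h22C.differentiableOn (by norm_num)
  have h111d : DifferentiableOn ℝ (q111 f) U := h111C.differentiableOn (by norm_num)
  have h211d : DifferentiableOn ℝ (q211 f) U := h211C.differentiableOn (by norm_num)
  have h221d : DifferentiableOn ℝ (q221 f) U := h221C.differentiableOn (by norm_num)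
  have h222d : DifferentiableOn ℝ (q222 f) U := h222C.differentiableOn (by norm_num)
  -- ### correspondence between pdx/pdy iterates and the words
  have e0 : ∀ p ∈ U, f p.1 p.2 = q0 f p := fun p _ => rfl
  have e1 : ∀ p ∈ U, pdx f p.1 p.2 = q1 f p := fun p hp => (pd_eq_D hU h0d e0 hp).1
  have e2 : ∀ p ∈ U, pdy f p.1 p.2 = q2 f p := fun p hp => (pd_eq_D hU h0d e0 hp).2
  have e11 : ∀ p ∈ U, pdx (pdx f) p.1 p.2 = q11 f p := fun p hp => (pd_eq_D hU h1d e1 hp).1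
  have e21 : ∀ p ∈ U, pdy (pdx f) p.1 p.2 = q21 f p := fun p hp => (pd_eq_D hU h1d e1 hp).2
  have e22 : ∀ p ∈ U, pdy (pdy f) p.1 p.2 = q22 f p := fun p hp => (pd_eq_D hU h2d e2 hp).2
  have e111 : ∀ p ∈ U, pdx (pdx (pdx f)) p.1 p.2 = q111 f p :=
    fun p hp => (pd_eq_D hU h11d e11 hp).1
  have e211 : ∀ p ∈ U, pdy (pdx (pdx f)) p.1 p.2 = q211 f p :=
    fun p hp => (pd_eq_D hU h11d e11 hp).2
  have e221 : ∀ p ∈ U, pdy (pdy (pdx f)) p.1 p.2 = q221 f p :=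
    fun p hp => (pd_eq_D hU h21d e21 hp).2
  have e222 : ∀ p ∈ U, pdy (pdy (pdy f)) p.1 p.2 = q222 f p :=
    fun p hp => (pd_eq_D hU h22d e22 hp).2
  have e1111 : pdx (pdx (pdx (pdx f))) x y = q1111 f (x, y) :=
    (pd_eq_D hU h111d e111 hp0).1
  have e2111 : pdy (pdx (pdx (pdx f))) x y = q2111 f (x, y) :=
    (pd_eq_D hU h111d e111 hp0).2
  have e2211 : pdy (pdy (pdx (pdx f))) x y = q2211 f (x, y) :=
    (pd_eq_D hU h211d e211 hp0).2
  have e2221 : pdy (pdy (pdy (pdx f))) x y = q2221 f (x, y) :=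
    (pd_eq_D hU h221d e221 hp0).2
  have e2222 : pdy (pdy (pdy (pdy f))) x y = q2222 f (x, y) :=
    (pd_eq_D hU h222d e222 hp0).2
  -- ### symmetry of mixed partials: canonical forms
  have s1 : ∀ p ∈ U, D1 (q2 f) p = q21 f p :=
    fun p hp => D_swap hU (h0C.of_le (by norm_num)) hp
  have s2 : ∀ p ∈ U, D1 (q21 f) p = q211 f p :=
    fun p hp => D_swap hU (h1C.of_le (by norm_num)) hp
  have s3 : ∀ p ∈ U, D1 (q22 f) p = q221 f p :=
    fun p hp => (D_swap hU (h2C.of_le (by norm_num)) hp).trans (D2_congr hU s1 hp)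
  have s5 : ∀ p ∈ U, D1 (q211 f) p = q2111 f p :=
    fun p hp => D_swap hU h11C hp
  have s6 : ∀ p ∈ U, D1 (q221 f) p = q2211 f p :=
    fun p hp => (D_swap hU h21C hp).trans (D2_congr hU s2 hp)
  have s7 : ∀ p ∈ U, D1 (q222 f) p = q2221 f p :=
    fun p hp => (D_swap hU h22C hp).trans (D2_congr hU s3 hp)
  -- ### the good set of parameters
  set T : Set ℝ := crv x y u v ⁻¹' U with hTdef
  have hcont : Continuous (crv x y u v) := by unfold crv; fun_prop
  have hTopen : IsOpen T := hU.preimage hcont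
  have hcrv0 : crv x y u v 0 = (x, y) := by simp [crv]
  have h0T : (0 : ℝ) ∈ T := by simp [hTdef, Set.mem_preimage, hcrv0, hp0]
  have hA0 : AA u v 0 = v := by simp [AA]
  have hB0 : BB u v 0 = -u := by simp [BB]
  have hC0 : CC u v 0 = u := by simp [CC]
  -- ### derivatives of the composite words along the curve
  have dq0 : ∀ t ∈ T, HasDerivAt (fun s => q0 f (crv x y u v s))
      (q1 f (crv x y u v t) * AA u v t + q2 f (crv x y u v t) * BB u v t) t :=
    fun t ht => comp_hasDerivAt hU h0d _ (crv_hasDerivAt x y u v t) ht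
  have dq1 : ∀ t ∈ T, HasDerivAt (fun s => q1 f (crv x y u v s))
      (q11 f (crv x y u v t) * AA u v t + q21 f (crv x y u v t) * BB u v t) t :=
    fun t ht => comp_hasDerivAt hU h1d _ (crv_hasDerivAt x y u v t) ht
  have dq2 : ∀ t ∈ T, HasDerivAt (fun s => q2 f (crv x y u v s))
      (q21 f (crv x y u v t) * AA u v t + q22 f (crv x y u v t) * BB u v t) t := by
    intro t ht
    have h := comp_hasDerivAt hU h2d _ (crv_hasDerivAt x y u v t) ht
    rw [s1 _ ht] at h
    exact h
  have dq11 : ∀ t ∈ T, HasDerivAt (fun s => q11 f (crv x y u v s))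
      (q111 f (crv x y u v t) * AA u v t + q211 f (crv x y u v t) * BB u v t) t :=
    fun t ht => comp_hasDerivAt hU h11d _ (crv_hasDerivAt x y u v t) ht
  have dq21 : ∀ t ∈ T, HasDerivAt (fun s => q21 f (crv x y u v s))
      (q211 f (crv x y u v t) * AA u v t + q221 f (crv x y u v t) * BB u v t) t := by
    intro t ht
    have h := comp_hasDerivAt hU h21d _ (crv_hasDerivAt x y u v t) ht
    rw [s2 _ ht] at h
    exact h
  have dq22 : ∀ t ∈ T, HasDerivAt (fun s => q22 f (crv x y u v s))
      (q221 f (crv x y u v t) * AA u v t + q222 f (crv x y u v t) * BB u v t) t := by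
    intro t ht
    have h := comp_hasDerivAt hU h22d _ (crv_hasDerivAt x y u v t) ht
    rw [s3 _ ht] at h
    exact h
  have dq111 : ∀ t ∈ T, HasDerivAt (fun s => q111 f (crv x y u v s))
      (q1111 f (crv x y u v t) * AA u v t + q2111 f (crv x y u v t) * BB u v t) t :=
    fun t ht => comp_hasDerivAt hU h111d _ (crv_hasDerivAt x y u v t) ht
  have dq211 : ∀ t ∈ T, HasDerivAt (fun s => q211 f (crv x y u v s))
      (q2111 f (crv x y u v t) * AA u v t + q2211 f (crv x y u v t) * BB u v t) t := by
    intro t ht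
    have h := comp_hasDerivAt hU h211d _ (crv_hasDerivAt x y u v t) ht
    rw [s5 _ ht] at h
    exact h
  have dq221 : ∀ t ∈ T, HasDerivAt (fun s => q221 f (crv x y u v s))
      (q2211 f (crv x y u v t) * AA u v t + q2221 f (crv x y u v t) * BB u v t) t := by
    intro t ht
    have h := comp_hasDerivAt hU h221d _ (crv_hasDerivAt x y u v t) ht
    rw [s6 _ ht] at h
    exact h
  have dq222 : ∀ t ∈ T, HasDerivAt (fun s => q222 f (crv x y u v s))
      (q2221 f (crv x y u v t) * AA u v t + q2222 f (crv x y u v t) * BB u v t) t := by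
    intro t ht
    have h := comp_hasDerivAt hU h222d _ (crv_hasDerivAt x y u v t) ht
    rw [s7 _ ht] at h
    exact h
  -- ### the chain of derivatives of the defect function
  have Hd0 : ∀ t ∈ T, HasDerivAt (fun s : ℝ =>
      z + a * Real.sin s + b * (1 - Real.cos s)
        - f (x + v * Real.sin s + u * (1 - Real.cos s))
            (y - u * Real.sin s + v * (1 - Real.cos s)))
      (gg1 f x y a b u v t) t := by
    intro t ht
    have h := (((hasDerivAt_const t z).add ((Real.hasDerivAt_sin t).const_mul a)).add
        (((Real.hasDerivAt_cos t).const_sub 1).const_mul b)).sub (dq0 t ht)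
    refine h.congr_deriv ?_
    unfold gg1; ring
  have Hd1 : ∀ t ∈ T, HasDerivAt (gg1 f x y a b u v) (gg2 f x y a b u v t) t := by
    intro t ht
    have dA := AA_hasDerivAt u v t
    have dB := BB_hasDerivAt u v t
    have h := (((Real.hasDerivAt_cos t).const_mul a).add
        ((Real.hasDerivAt_sin t).const_mul b)).sub
      (((dq1 t ht).mul dA).add ((dq2 t ht).mul dB))
    refine h.congr_deriv ?_
    unfold gg2; beta_reduce; ring
  have Hd2 : ∀ t ∈ T, HasDerivAt (gg2 f x y a b u v) (gg3 f x y a b u v t) t := by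
    intro t ht
    have dA := AA_hasDerivAt u v t
    have dB := BB_hasDerivAt u v t
    have dC := CC_hasDerivAt u v t
    have T1 := (dq11 t ht).mul (dA.pow 2)
    have T2 := ((dq21 t ht).mul (dA.mul dB)).const_mul (2:ℝ)
    have T3 := (dq22 t ht).mul (dB.pow 2)
    have T4 := (dq1 t ht).mul dC
    have T5 := (dq2 t ht).mul dA
    have htrig := ((Real.hasDerivAt_cos t).const_mul b).sub
      ((Real.hasDerivAt_sin t).const_mul a)
    have h := htrig.sub ((((T1.add T2).add T3).add T4).add T5)
    refine h.congr_deriv ?_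
    unfold gg3
    beta_reduce
    simp only [Pi.pow_apply, Pi.mul_apply, Pi.add_apply]
    push_cast
    ring
  have Hd3 : ∀ t ∈ T, HasDerivAt (gg3 f x y a b u v) (gg4 f x y a b u v t) t := by
    intro t ht
    have dA := AA_hasDerivAt u v t
    have dB := BB_hasDerivAt u v t
    have dC := CC_hasDerivAt u v t
    have T1 := (dq111 t ht).mul (dA.pow 3)
    have T2 := ((dq211 t ht).mul ((dA.pow 2).mul dB)).const_mul (3:ℝ)
    have T3 := ((dq221 t ht).mul (dA.mul (dB.pow 2))).const_mul (3:ℝ)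
    have T4 := (dq222 t ht).mul (dB.pow 3)
    have T5 := ((dq11 t ht).mul (dA.mul dC)).const_mul (3:ℝ)
    have T6 := ((dq21 t ht).mul ((dA.pow 2).add (dB.mul dC))).const_mul (3:ℝ)
    have T7 := ((dq22 t ht).mul (dA.mul dB)).const_mul (3:ℝ)
    have T8 := (dq1 t ht).mul dA
    have T9 := (dq2 t ht).mul dC
    have htrig := (((Real.hasDerivAt_cos t).const_mul a).neg).sub
      ((Real.hasDerivAt_sin t).const_mul b)
    have h := htrig.sub (((((((T1.add T2).add T3).add T4).add T5).add T6).add T7).sub T8 |>.add T9)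
    refine h.congr_deriv ?_
    unfold gg4
    beta_reduce
    simp only [Pi.pow_apply, Pi.mul_apply, Pi.add_apply]
    push_cast
    ring
  -- ### hypotheses in word form
  have E1 : pdx f x y = q1 f (x, y) := e1 (x, y) hp0
  have E2 : pdy f x y = q2 f (x, y) := e2 (x, y) hp0
  have E11 : pdx (pdx f) x y = q11 f (x, y) := e11 (x, y) hp0
  have E21 : pdy (pdx f) x y = q21 f (x, y) := e21 (x, y) hp0
  have E22 : pdy (pdy f) x y = q22 f (x, y) := e22 (x, y) hp0
  have E111 : pdx (pdx (pdx f)) x y = q111 f (x, y) := e111 (x, y) hp0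
  have E211 : pdy (pdx (pdx f)) x y = q211 f (x, y) := e211 (x, y) hp0
  have E221 : pdy (pdy (pdx f)) x y = q221 f (x, y) := e221 (x, y) hp0
  have E222 : pdy (pdy (pdy f)) x y = q222 f (x, y) := e222 (x, y) hp0
  rw [E1, E2] at ha
  rw [E1, E2, E11, E21, E22] at hb
  rw [E111, E211, E221, E222, E11, E22, E21] at h3
  rw [e1111, e2111, e2211, e2221, e2222, E111, E211, E221, E222, E11, E22, E21]
  -- ### values at 0
  have hg10 : gg1 f x y a b u v 0 = 0 := by
    unfold gg1
    rw [hcrv0, hA0, hB0]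
    simp only [Real.sin_zero, Real.cos_zero]
    linear_combination ha
  have hg20 : gg2 f x y a b u v 0 = 0 := by
    unfold gg2
    rw [hcrv0, hA0, hB0, hC0]
    simp only [Real.sin_zero, Real.cos_zero]
    linear_combination hb
  have hg30 : gg3 f x y a b u v 0 = 0 := by
    unfold gg3
    rw [hcrv0, hA0, hB0, hC0]
    simp only [Real.sin_zero, Real.cos_zero]
    linear_combination (-1 : ℝ) * h3 - ha
  have hg40 : gg4 f x y a b u v 0 =
      -(q1111 f (x, y) * v ^ 4 - 4 * q2111 f (x, y) * v ^ 3 * u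
        + 6 * q2211 f (x, y) * v ^ 2 * u ^ 2 - 4 * q2221 f (x, y) * v * u ^ 3
        + q2222 f (x, y) * u ^ 4 + 6 * u * v ^ 2 * q111 f (x, y)
        + 6 * v * (v ^ 2 - 2 * u ^ 2) * q211 f (x, y)
        + 6 * u * (u ^ 2 - 2 * v ^ 2) * q221 f (x, y)
        + 6 * u ^ 2 * v * q222 f (x, y)
        + 3 * (u ^ 2 - v ^ 2) * (q11 f (x, y) - q22 f (x, y))
        + 12 * u * v * q21 f (x, y)) := by
    unfold gg4
    rw [hcrv0, hA0, hB0, hC0]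
    simp only [Real.sin_zero, Real.cos_zero]
    linear_combination -hb
  -- ### the L'Hôpital chain
  have hTn : T ∈ nhds (0 : ℝ) := hTopen.mem_nhds h0T
  have hTn' : ∀ᶠ t in nhdsWithin (0:ℝ) {(0:ℝ)}ᶜ, t ∈ T :=
    eventually_nhdsWithin_of_eventually_nhds (eventually_of_mem hTn fun t ht => ht)
  have hne : ∀ᶠ t in nhdsWithin (0:ℝ) {(0:ℝ)}ᶜ, t ≠ (0:ℝ) := by
    filter_upwards [self_mem_nhdsWithin] with t ht using ht
  have step3 : Tendsto (fun t => gg3 f x y a b u v t / (24 * t))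
      (nhdsWithin (0:ℝ) {(0:ℝ)}ᶜ) (nhds (gg4 f x y a b u v 0 / 24)) := by
    have hD : HasDerivAt (gg3 f x y a b u v) (gg4 f x y a b u v 0) 0 := Hd3 0 h0T
    have hs := hasDerivAt_iff_tendsto_slope.1 hD
    have h2 := hs.div_const 24
    have heq : (fun t => slope (gg3 f x y a b u v) 0 t / 24)
        = fun t => gg3 f x y a b u v t / (24 * t) := by
      funext t
      rw [slope_def_field, hg30, sub_zero, sub_zero, div_div, mul_comm]
    rw [heq] at h2
    exact h2
  have step2 : Tendsto (fun t => gg2 f x y a b u v t / (12 * t ^ 2))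
      (nhdsWithin (0:ℝ) {(0:ℝ)}ᶜ) (nhds (gg4 f x y a b u v 0 / 24)) := by
    apply HasDerivAt.lhopital_zero_nhdsNE (f' := gg3 f x y a b u v) (g' := fun t => 24 * t)
    · filter_upwards [hTn'] with t ht using Hd2 t ht
    · refine Eventually.of_forall fun t => ?_
      have h := (hasDerivAt_pow 2 t).const_mul (12 : ℝ)
      refine h.congr_deriv ?_
      all_goals push_cast; ring
    · filter_upwards [hne] with t ht using mul_ne_zero (by norm_num) ht
    · have h : Tendsto (gg2 f x y a b u v) (nhdsWithin (0:ℝ) {(0:ℝ)}ᶜ)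
          (nhds (gg2 f x y a b u v 0)) :=
        (Hd2 0 h0T).continuousAt.tendsto.mono_left nhdsWithin_le_nhds
      rwa [hg20] at h
    · have hcont2 : Continuous fun t : ℝ => 12 * t ^ 2 := by fun_prop
      have h : Tendsto (fun t : ℝ => 12 * t ^ 2) (nhdsWithin (0:ℝ) {(0:ℝ)}ᶜ)
          (nhds ((fun t : ℝ => 12 * t ^ 2) 0)) :=
        (hcont2.tendsto 0).mono_left nhdsWithin_le_nhds
      simpa using h
    · exact step3
  have step1 : Tendsto (fun t => gg1 f x y a b u v t / (4 * t ^ 3))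
      (nhdsWithin (0:ℝ) {(0:ℝ)}ᶜ) (nhds (gg4 f x y a b u v 0 / 24)) := by
    apply HasDerivAt.lhopital_zero_nhdsNE (f' := gg2 f x y a b u v) (g' := fun t => 12 * t ^ 2)
    · filter_upwards [hTn'] with t ht using Hd1 t ht
    · refine Eventually.of_forall fun t => ?_
      have h := (hasDerivAt_pow 3 t).const_mul (4 : ℝ)
      refine h.congr_deriv ?_
      all_goals push_cast; ring
    · filter_upwards [hne] with t ht
      exact mul_ne_zero (by norm_num) (pow_ne_zero 2 ht)
    · have h : Tendsto (gg1 f x y a b u v) (nhdsWithin (0:ℝ) {(0:ℝ)}ᶜ)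
          (nhds (gg1 f x y a b u v 0)) :=
        (Hd1 0 h0T).continuousAt.tendsto.mono_left nhdsWithin_le_nhds
      rwa [hg10] at h
    · have hcont2 : Continuous fun t : ℝ => 4 * t ^ 3 := by fun_prop
      have h : Tendsto (fun t : ℝ => 4 * t ^ 3) (nhdsWithin (0:ℝ) {(0:ℝ)}ᶜ)
          (nhds ((fun t : ℝ => 4 * t ^ 3) 0)) :=
        (hcont2.tendsto 0).mono_left nhdsWithin_le_nhds
      simpa using h
    · exact step2
  have step0 : Tendsto (fun t : ℝ =>
      (z + a * Real.sin t + b * (1 - Real.cos t)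
        - f (x + v * Real.sin t + u * (1 - Real.cos t))
            (y - u * Real.sin t + v * (1 - Real.cos t))) / t ^ 4)
      (nhdsWithin (0:ℝ) {(0:ℝ)}ᶜ) (nhds (gg4 f x y a b u v 0 / 24)) := by
    apply HasDerivAt.lhopital_zero_nhdsNE (f' := gg1 f x y a b u v) (g' := fun t => 4 * t ^ 3)
    · filter_upwards [hTn'] with t ht using Hd0 t ht
    · refine Eventually.of_forall fun t => ?_
      have h := hasDerivAt_pow 4 t
      refine h.congr_deriv ?_
      all_goals push_cast; ring
    · filter_upwards [hne] with t ht
      exact mul_ne_zero (by norm_num) (pow_ne_zero 3 ht)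
    · have h : Tendsto (fun t : ℝ =>
          z + a * Real.sin t + b * (1 - Real.cos t)
            - f (x + v * Real.sin t + u * (1 - Real.cos t))
                (y - u * Real.sin t + v * (1 - Real.cos t)))
          (nhdsWithin (0:ℝ) {(0:ℝ)}ᶜ)
          (nhds ((fun t : ℝ =>
          z + a * Real.sin t + b * (1 - Real.cos t)
            - f (x + v * Real.sin t + u * (1 - Real.cos t))
                (y - u * Real.sin t + v * (1 - Real.cos t))) 0)) :=
        (Hd0 0 h0T).continuousAt.tendsto.mono_left nhdsWithin_le_nhds
      have hval : (fun t : ℝ =>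
          z + a * Real.sin t + b * (1 - Real.cos t)
            - f (x + v * Real.sin t + u * (1 - Real.cos t))
                (y - u * Real.sin t + v * (1 - Real.cos t))) 0 = 0 := by
        simp [hz]
      rwa [hval] at h
    · have hcont2 : Continuous fun t : ℝ => t ^ 4 := by fun_prop
      have h : Tendsto (fun t : ℝ => t ^ 4) (nhdsWithin (0:ℝ) {(0:ℝ)}ᶜ)
          (nhds ((fun t : ℝ => t ^ 4) 0)) :=
        (hcont2.tendsto 0).mono_left nhdsWithin_le_nhds
      simpa using h
    · exact step1
  -- ### conclusion
  haveI : (nhdsWithin (0:ℝ) {(0:ℝ)}ᶜ).NeBot := by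
    exact NormedField.nhdsNE_neBot 0
  constructor
  · intro h
    have huniq := tendsto_nhds_unique step0 h
    rw [hg40] at huniq
    linarith
  · intro hE
    have hzero : gg4 f x y a b u v 0 = 0 := by
      rw [hg40]
      linarith
    rw [hzero, zero_div] at step0
    exact step0
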